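/- Suppose h : ℝ → ℝ has property (L), let U = {x ∈ ℝ : h(x) > 0}, and let I ⊆ U be a closed bounded interval satisfying max{|I|, inf_{x∈I} h(x), sup_{x∈I} h(x)} ≤ 6 min{|I|, inf_{x∈I} h(x), sup_{x∈I} h(x)}. Let κ ≥ 0 be an integer and let g : U → ℂ satisfy at least one of: (a) g is C¹ on U and (h(x))^{κ+1} |g′(x)| ≤ K for all x ∈ U; or (b) for some α ∈ (0,1] and constants c > 0, K ≥ 0, one has |g(x) − g(y)| ≤ K |x−y|^α (h(x))^{−κ−α} whenever x, y ∈ U and |x−y| ≤ c h(x). Then either sup_{x∈I} |g(x)| ≤ C inf_{x∈I} |g(x)| or sup_{x∈I} |g(x)| ≤ C |I|^{−κ}, where C depends only on K, κ in case (a), and only on K, κ, α, c in case (b). -/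

import Mathlib

open MeasureTheory Real Set
open scoped ENNReal NNReal Topology Classical

noncomputable section

/-- A continuous nonnegative `h : ℝ → ℝ` has property (L) if for every bounded interval `J`,
either `sup_J h ≤ 2 inf_J h` or `sup_J h < 2|J|`. -/
def PropertyL (h : ℝ → ℝ) : Prop :=
  Continuous h ∧ (∀ x, 0 ≤ h x) ∧
    ∀ a b : ℝ, a ≤ b →
      sSup (h '' Set.Icc a b) ≤ 2 * sInf (h '' Set.Icc a b) ∨
        sSup (h '' Set.Icc a b) < 2 * (b - a)

/-- **Proposition 2.4.** Suppose `h` has property (L), `U = {h > 0}`, and `I = [a,b] ⊆ U`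
satisfies `max{|I|, inf_I h, sup_I h} ≤ 6 min{|I|, inf_I h, sup_I h}`.  If `g : U → ℂ`
satisfies (a) `g ∈ C¹(U)` with `h^{κ+1}|g′| ≤ K` on `U`, or
(b) `|g(x) − g(y)| ≤ K|x−y|^α h(x)^{−κ−α}` whenever `x, y ∈ U` and `|x−y| ≤ c h(x)`,
then either `sup_I |g| ≤ C inf_I |g|` or `sup_I |g| ≤ C |I|^{−κ}`, with `C` depending only
on `K, κ` in case (a) and only on `K, κ, α, c` in case (b). -/

lemma aux_dichot (g : ℝ → ℂ) (a b : ℝ) (hab : a ≤ b) (D : ℝ)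
    (hb : ∀ x ∈ Set.Icc a b, ∀ y ∈ Set.Icc a b, ‖g x‖ ≤ ‖g y‖ + D) :
    sSup ((fun x => ‖g x‖) '' Set.Icc a b) ≤ 2 * sInf ((fun x => ‖g x‖) '' Set.Icc a b) ∨
      sSup ((fun x => ‖g x‖) '' Set.Icc a b) ≤ 2 * D := by
  set S := (fun x => ‖g x‖) '' Set.Icc a b with hS
  have ha : a ∈ Set.Icc a b := ⟨le_rfl, hab⟩
  have hne : S.Nonempty := ⟨‖g a‖, a, ha, rfl⟩
  have hsup_le : sSup S ≤ sInf S + D := by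
    refine csSup_le hne ?_
    rintro s ⟨x, hx, rfl⟩
    have : ‖g x‖ - D ≤ sInf S := by
      refine le_csInf hne ?_
      rintro t ⟨y, hy, rfl⟩
      have := hb x hx y hy
      linarith
    linarith
  have hinf0 : 0 ≤ sInf S := le_csInf hne (by rintro t ⟨y, hy, rfl⟩; exact norm_nonneg _)
  by_cases hc : sInf S ≤ D
  · right; linarith
  · left; linarith

lemma aux_chain (g : ℝ → ℂ) (a b : ℝ) {x y : ℝ} (hx : x ∈ Set.Icc a b) (hy : y ∈ Set.Icc a b)
    (N : ℕ) (hN : 0 < N) (E : ℝ)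
    (hstep : ∀ u ∈ Set.Icc a b, ∀ v ∈ Set.Icc a b, |u - v| ≤ (b - a) / N → ‖g u - g v‖ ≤ E) :
    ‖g x - g y‖ ≤ N * E := by
  set p : ℕ → ℝ := fun i => x + (i : ℝ) / N * (y - x) with hp
  have hNr : (0:ℝ) < N := by exact_mod_cast hN
  have hmem : ∀ i : ℕ, i ≤ N → p i ∈ Set.Icc a b := by
    intro i hi
    have ht0 : (0:ℝ) ≤ (i : ℝ) / N := by positivity
    have ht1 : (i : ℝ) / N ≤ 1 := by
      rw [div_le_one hNr]; exact_mod_cast hi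
    obtain ⟨hx1, hx2⟩ := hx
    obtain ⟨hy1, hy2⟩ := hy
    simp only [hp]
    constructor
    · nlinarith [mul_nonneg (sub_nonneg.2 ht1) (sub_nonneg.2 hx1), mul_nonneg ht0 (sub_nonneg.2 hy1)]
    · nlinarith [mul_nonneg (sub_nonneg.2 ht1) (sub_nonneg.2 hx2), mul_nonneg ht0 (sub_nonneg.2 hy2)]
  have hdist : ∀ i : ℕ, |p i - p (i + 1)| ≤ (b - a) / N := by
    intro i
    have : p i - p (i + 1) = -((y - x) / N) := by
      simp only [hp]; push_cast; field_simp; ring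
    rw [this, abs_neg, abs_div, abs_of_pos hNr]
    have hyx : |y - x| ≤ b - a := by
      rw [abs_sub_le_iff]
      constructor <;> linarith [hx.1, hx.2, hy.1, hy.2]
    gcongr
  have htel : g x - g y = ∑ i ∈ Finset.range N, (g (p i) - g (p (i + 1))) := by
    rw [Finset.sum_range_sub' (fun i => g (p i)) N]
    have h0 : p 0 = x := by simp [hp]
    have hNN : p N = y := by
      simp only [hp]
      field_simp
      ring
    rw [h0, hNN]
  calc ‖g x - g y‖ = ‖∑ i ∈ Finset.range N, (g (p i) - g (p (i + 1)))‖ := by rw [htel]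
    _ ≤ ∑ i ∈ Finset.range N, ‖g (p i) - g (p (i + 1))‖ := norm_sum_le _ _
    _ ≤ ∑ _i ∈ Finset.range N, E := by
        refine Finset.sum_le_sum ?_
        intro i hi
        rw [Finset.mem_range] at hi
        exact hstep _ (hmem i hi.le) _ (hmem (i+1) hi) (hdist i)
    _ = N * E := by rw [Finset.sum_const, Finset.card_range, nsmul_eq_mul]

theorem main_a (κ : ℕ) (K : ℝ) (hK : 0 ≤ K) : ∃ C : ℝ, 0 < C ∧
      ∀ h : ℝ → ℝ, PropertyL h → ∀ a b : ℝ, a ≤ b →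
        Set.Icc a b ⊆ {x : ℝ | 0 < h x} →
        max (b - a) (max (sInf (h '' Set.Icc a b)) (sSup (h '' Set.Icc a b))) ≤
          6 * min (b - a) (min (sInf (h '' Set.Icc a b)) (sSup (h '' Set.Icc a b))) →
        ∀ g : ℝ → ℂ, ContDiffOn ℝ 1 g {x : ℝ | 0 < h x} →
          (∀ x ∈ {x : ℝ | 0 < h x}, h x ^ (κ + 1) * ‖deriv g x‖ ≤ K) →
          (sSup ((fun x => ‖g x‖) '' Set.Icc a b) ≤
              C * sInf ((fun x => ‖g x‖) '' Set.Icc a b) ∨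
            sSup ((fun x => ‖g x‖) '' Set.Icc a b) ≤ C * (b - a) ^ (-(κ : ℤ))) := by
  have h6p : (0:ℝ) ≤ 2 * K * 6 ^ (κ + 1) :=
    mul_nonneg (mul_nonneg (by norm_num) hK) (pow_nonneg (by norm_num) _)
  refine ⟨2 + 2 * K * 6 ^ (κ + 1), by linarith, ?_⟩
  intro h hL a b hab hsub hcomp g hg hder
  rcases eq_or_lt_of_le hab with rfl | hlt
  · left
    rw [Set.Icc_self, Set.image_singleton, csSup_singleton, csInf_singleton]
    exact le_mul_of_one_le_left (norm_nonneg _) (by linarith)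
  · have hUopen : IsOpen {x : ℝ | 0 < h x} := isOpen_lt continuous_const hL.1
    have hinfle : b - a ≤ 6 * sInf (h '' Set.Icc a b) := by
      have h1 := le_trans (le_max_left (b - a) _) hcomp
      have h2 : min (b - a) (min (sInf (h '' Set.Icc a b)) (sSup (h '' Set.Icc a b))) ≤
          sInf (h '' Set.Icc a b) := le_trans (min_le_right _ _) (min_le_left _ _)
      linarith
    set L := b - a with hLdef
    have hL0 : 0 < L := sub_pos.2 hlt
    have hm : ∀ x ∈ Set.Icc a b, L / 6 ≤ h x := by
      intro x hx
      have : sInf (h '' Set.Icc a b) ≤ h x :=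
        csInf_le ⟨0, by rintro t ⟨y, hy, rfl⟩; exact hL.2.1 y⟩ ⟨x, hx, rfl⟩
      linarith
    set B := K / (L / 6) ^ (κ + 1) with hB
    have hB0 : 0 ≤ B := div_nonneg hK (by positivity)
    have hbound : ∀ x ∈ Set.Icc a b, ‖deriv g x‖ ≤ B := by
      intro x hx
      have hP : (0:ℝ) < (L / 6) ^ (κ + 1) := by positivity
      rw [hB, le_div_iff₀ hP]
      calc ‖deriv g x‖ * (L / 6) ^ (κ + 1)
          ≤ ‖deriv g x‖ * h x ^ (κ + 1) :=
            mul_le_mul_of_nonneg_left (pow_le_pow_left₀ (by positivity) (hm x hx) _)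
              (norm_nonneg _)
        _ = h x ^ (κ + 1) * ‖deriv g x‖ := mul_comm _ _
        _ ≤ K := hder x (hsub hx)
    have hderiv : ∀ x ∈ Set.Icc a b, HasDerivWithinAt g (deriv g x) (Set.Icc a b) x := by
      intro x hx
      have : DifferentiableAt ℝ g x :=
        (hg.differentiableOn one_ne_zero).differentiableAt (hUopen.mem_nhds (hsub hx))
      exact this.hasDerivAt.hasDerivWithinAt
    have hdiff : ∀ x ∈ Set.Icc a b, ∀ y ∈ Set.Icc a b, ‖g x‖ ≤ ‖g y‖ + B * L := by
      intro x hx y hy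
      have h1 := Convex.norm_image_sub_le_of_norm_hasDerivWithin_le hderiv hbound
        (convex_Icc a b) hy hx
      have h2 : ‖x - y‖ ≤ L := by
        rw [Real.norm_eq_abs, abs_sub_le_iff]
        constructor <;> [linarith [hx.2, hy.1]; linarith [hy.2, hx.1]]
      have h3 : ‖g x‖ - ‖g y‖ ≤ ‖g x - g y‖ := norm_sub_norm_le _ _
      nlinarith [mul_le_mul_of_nonneg_left h2 hB0]
    rcases aux_dichot g a b hab (B * L) hdiff with hd | hd
    · left
      have hinf0 : 0 ≤ sInf ((fun x => ‖g x‖) '' Set.Icc a b) :=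
        le_csInf ⟨‖g a‖, a, ⟨le_rfl, hab⟩, rfl⟩ (by rintro t ⟨y, hy, rfl⟩; exact norm_nonneg _)
      nlinarith [mul_nonneg h6p hinf0]
    · right
      have hLne : L ≠ 0 := hL0.ne'
      have hkey : 2 * (B * L) = 2 * K * 6 ^ (κ + 1) * (L ^ κ)⁻¹ := by
        rw [hB]; field_simp
        have h7 : (L / 6) ^ κ * 6 ^ κ = L ^ κ := by
          rw [← mul_pow, div_mul_cancel₀ L (by norm_num : (6:ℝ) ≠ 0)]
        linear_combination (-(K * L)) * h7
      rw [zpow_neg, zpow_natCast]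
      calc sSup ((fun x => ‖g x‖) '' Set.Icc a b) ≤ 2 * (B * L) := hd
        _ = 2 * K * 6 ^ (κ + 1) * (L ^ κ)⁻¹ := hkey
        _ ≤ (2 + 2 * K * 6 ^ (κ + 1)) * (L ^ κ)⁻¹ := by
            have hi : (0:ℝ) ≤ (L ^ κ)⁻¹ := by positivity
            nlinarith

theorem main_b (κ : ℕ) (K α c : ℝ) (hK : 0 ≤ K) (hα0 : 0 < α) (hα1 : α ≤ 1) (hc : 0 < c) :
    ∃ C : ℝ, 0 < C ∧
      ∀ h : ℝ → ℝ, PropertyL h → ∀ a b : ℝ, a ≤ b →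
        Set.Icc a b ⊆ {x : ℝ | 0 < h x} →
        max (b - a) (max (sInf (h '' Set.Icc a b)) (sSup (h '' Set.Icc a b))) ≤
          6 * min (b - a) (min (sInf (h '' Set.Icc a b)) (sSup (h '' Set.Icc a b))) →
        ∀ g : ℝ → ℂ,
          (∀ x ∈ {x : ℝ | 0 < h x}, ∀ y ∈ {x : ℝ | 0 < h x}, |x - y| ≤ c * h x →
            ‖g x - g y‖ ≤ K * |x - y| ^ α * h x ^ (-((κ : ℝ) + α))) →
          (sSup ((fun x => ‖g x‖) '' Set.Icc a b) ≤
              C * sInf ((fun x => ‖g x‖) '' Set.Icc a b) ∨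
            sSup ((fun x => ‖g x‖) '' Set.Icc a b) ≤ C * (b - a) ^ (-(κ : ℤ))) := by
  set s : ℝ := (κ : ℝ) + α with hs
  set N : ℕ := max 1 ⌈6 / c⌉₊ with hN
  have hNpos : 0 < N := lt_of_lt_of_le one_pos (le_max_left _ _)
  have hNr : (0:ℝ) < (N : ℝ) := by exact_mod_cast hNpos
  have h6s : (0:ℝ) < 6 ^ s := Real.rpow_pos_of_pos (by norm_num) _
  have hcn : (0:ℝ) ≤ 2 * (N : ℝ) * K * 6 ^ s :=
    mul_nonneg (mul_nonneg (by positivity) hK) h6s.le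
  refine ⟨2 + 2 * (N : ℝ) * K * 6 ^ s, by linarith, ?_⟩
  intro h hL a b hab hsub hcomp g hHol
  rcases eq_or_lt_of_le hab with rfl | hlt
  · left
    rw [Set.Icc_self, Set.image_singleton, csSup_singleton, csInf_singleton]
    exact le_mul_of_one_le_left (norm_nonneg _) (by linarith)
  · have hinfle : b - a ≤ 6 * sInf (h '' Set.Icc a b) := by
      have h1 := le_trans (le_max_left (b - a) _) hcomp
      have h2 : min (b - a) (min (sInf (h '' Set.Icc a b)) (sSup (h '' Set.Icc a b))) ≤
          sInf (h '' Set.Icc a b) := le_trans (min_le_right _ _) (min_le_left _ _)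
      linarith
    set L := b - a with hLdef
    have hL0 : 0 < L := sub_pos.2 hlt
    have hm : ∀ x ∈ Set.Icc a b, L / 6 ≤ h x := by
      intro x hx
      have : sInf (h '' Set.Icc a b) ≤ h x :=
        csInf_le ⟨0, by rintro t ⟨y, hy, rfl⟩; exact hL.2.1 y⟩ ⟨x, hx, rfl⟩
      linarith
    have hNc : 6 / c ≤ (N : ℝ) := le_trans (Nat.le_ceil _) (by exact_mod_cast le_max_right 1 _)
    have h6cN : 6 ≤ c * (N : ℝ) := by
      rw [div_le_iff₀ hc] at hNc; linarith
    set E := K * L ^ α * (L / 6) ^ (-s) with hE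
    have hstep : ∀ u ∈ Set.Icc a b, ∀ v ∈ Set.Icc a b, |u - v| ≤ (b - a) / N →
        ‖g u - g v‖ ≤ E := by
      intro u hu v hv huv
      have hhu : 0 < h u := hsub hu
      have hL6 : L / 6 ≤ h u := hm u hu
      have h1 : |u - v| ≤ c * h u := by
        have hLN : L / N ≤ c * h u := by
          rw [div_le_iff₀ hNr]
          nlinarith [mul_le_mul h6cN hL6 (by positivity) (by positivity)]
        exact le_trans huv hLN
      have hHuv := hHol u (hsub hu) v (hsub hv) h1
      have h2 : |u - v| ^ α ≤ L ^ α := by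
        refine Real.rpow_le_rpow (abs_nonneg _) ?_ hα0.le
        refine le_trans huv ?_
        refine div_le_self hL0.le ?_
        exact_mod_cast hNpos
      have hs0 : (0:ℝ) ≤ s := add_nonneg (Nat.cast_nonneg κ) hα0.le
      have h3 : h u ^ (-s) ≤ (L / 6) ^ (-s) :=
        Real.rpow_le_rpow_of_nonpos (by positivity) hL6 (neg_nonpos.2 hs0)
      calc ‖g u - g v‖ ≤ K * |u - v| ^ α * h u ^ (-s) := hHuv
        _ ≤ K * L ^ α * (L / 6) ^ (-s) := by
            refine mul_le_mul (mul_le_mul le_rfl h2 (by positivity) hK) h3 ?_ ?_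
            · positivity
            · exact mul_nonneg hK (by positivity)
    have hdiff : ∀ x ∈ Set.Icc a b, ∀ y ∈ Set.Icc a b, ‖g x‖ ≤ ‖g y‖ + N * E := by
      intro x hx y hy
      have h1 := aux_chain g a b hx hy N hNpos E hstep
      have h3 : ‖g x‖ - ‖g y‖ ≤ ‖g x - g y‖ := norm_sub_norm_le _ _
      linarith
    rcases aux_dichot g a b hab ((N : ℝ) * E) hdiff with hd | hd
    · left
      have hinf0 : 0 ≤ sInf ((fun x => ‖g x‖) '' Set.Icc a b) :=
        le_csInf ⟨‖g a‖, a, ⟨le_rfl, hab⟩, rfl⟩ (by rintro t ⟨y, hy, rfl⟩; exact norm_nonneg _)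
      nlinarith [mul_nonneg hcn hinf0]
    · right
      have e1 : (L / 6 : ℝ) ^ (-s) = 6 ^ s / L ^ s := by
        rw [Real.rpow_neg (by positivity), Real.div_rpow hL0.le (by norm_num : (0:ℝ) ≤ 6),
          inv_div]
      have e2 : L ^ (-(κ : ℝ)) = L ^ α / L ^ s := by
        rw [← Real.rpow_sub hL0]
        congr 1
        rw [hs]; ring
      have hEeq : 2 * ((N : ℝ) * E) = 2 * (N : ℝ) * K * 6 ^ s * L ^ (-(κ : ℝ)) := by
        rw [hE, e1, e2]; ring
      have hzp : L ^ (-(κ : ℤ)) = L ^ (-(κ : ℝ)) := by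
        rw [← Real.rpow_intCast L (-(κ : ℤ))]; norm_num
      rw [hzp]
      calc sSup ((fun x => ‖g x‖) '' Set.Icc a b) ≤ 2 * ((N : ℝ) * E) := hd
        _ = 2 * (N : ℝ) * K * 6 ^ s * L ^ (-(κ : ℝ)) := hEeq
        _ ≤ (2 + 2 * (N : ℝ) * K * 6 ^ s) * L ^ (-(κ : ℝ)) := by
            have hi : (0:ℝ) ≤ L ^ (-(κ : ℝ)) := (Real.rpow_pos_of_pos hL0 _).le
            nlinarith

theorem comparable_or_small_of_propertyL :
    (∀ (κ : ℕ) (K : ℝ), 0 ≤ K → ∃ C : ℝ, 0 < C ∧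
      ∀ h : ℝ → ℝ, PropertyL h → ∀ a b : ℝ, a ≤ b →
        Set.Icc a b ⊆ {x : ℝ | 0 < h x} →
        max (b - a) (max (sInf (h '' Set.Icc a b)) (sSup (h '' Set.Icc a b))) ≤
          6 * min (b - a) (min (sInf (h '' Set.Icc a b)) (sSup (h '' Set.Icc a b))) →
        ∀ g : ℝ → ℂ, ContDiffOn ℝ 1 g {x : ℝ | 0 < h x} →
          (∀ x ∈ {x : ℝ | 0 < h x}, h x ^ (κ + 1) * ‖deriv g x‖ ≤ K) →
          (sSup ((fun x => ‖g x‖) '' Set.Icc a b) ≤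
              C * sInf ((fun x => ‖g x‖) '' Set.Icc a b) ∨
            sSup ((fun x => ‖g x‖) '' Set.Icc a b) ≤ C * (b - a) ^ (-(κ : ℤ)))) ∧
    (∀ (κ : ℕ) (K α c : ℝ), 0 ≤ K → 0 < α → α ≤ 1 → 0 < c → ∃ C : ℝ, 0 < C ∧
      ∀ h : ℝ → ℝ, PropertyL h → ∀ a b : ℝ, a ≤ b →
        Set.Icc a b ⊆ {x : ℝ | 0 < h x} →
        max (b - a) (max (sInf (h '' Set.Icc a b)) (sSup (h '' Set.Icc a b))) ≤
          6 * min (b - a) (min (sInf (h '' Set.Icc a b)) (sSup (h '' Set.Icc a b))) →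
        ∀ g : ℝ → ℂ,
          (∀ x ∈ {x : ℝ | 0 < h x}, ∀ y ∈ {x : ℝ | 0 < h x}, |x - y| ≤ c * h x →
            ‖g x - g y‖ ≤ K * |x - y| ^ α * h x ^ (-((κ : ℝ) + α))) →
          (sSup ((fun x => ‖g x‖) '' Set.Icc a b) ≤
              C * sInf ((fun x => ‖g x‖) '' Set.Icc a b) ∨
            sSup ((fun x => ‖g x‖) '' Set.Icc a b) ≤ C * (b - a) ^ (-(κ : ℤ)))) := by
  exact ⟨fun κ K hK => main_a κ K hK, fun κ K α c hK hα0 hα1 hc => main_b κ K α c hK hα0 hα1 hc⟩
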